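/- For every integer k ≥ 9, the undirected repetition threshold satisfies URT(k) ≤ RT(⌊k/3⌋). -/
import Mathlib


/-- `x` is a (finite, contiguous) factor of the infinite word `w`. -/
def InfFactor {A : Type*} (x : List A) (w : ℕ → A) : Prop :=
  ∃ i : ℕ, x = (List.range x.length).map fun j => w (i + j)

/-- `z` is an undirected `r`-power: `z = x ++ y ++ x'` with `x` nonempty,
`x' = x` or `x' = x.reverse`, and `|x y x'| / |x y| = r`. -/
def IsUndirectedPow {A : Type*} (r : ℚ) (z : List A) : Prop :=
  ∃ x y x' : List A, z = x ++ y ++ x' ∧ x ≠ [] ∧ (x' = x ∨ x' = x.reverse) ∧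
    (z.length : ℚ) = r * ((x.length : ℚ) + (y.length : ℚ))

/-- `z` is an ordinary `r`-power: `z = x ++ y ++ x` with `x` nonempty and `|x y x| / |x y| = r`. -/
def IsOrdinaryPow {A : Type*} (r : ℚ) (z : List A) : Prop :=
  ∃ x y : List A, z = x ++ y ++ x ∧ x ≠ [] ∧
    (z.length : ℚ) = r * ((x.length : ℚ) + (y.length : ℚ))

/-- The infinite word `w` is undirected `α`-free: no factor of `w` is an undirected
`r`-power with rational `r ≥ α` (where `1 < r ≤ 2`). -/
def UndirectedFree {A : Type*} (α : ℝ) (w : ℕ → A) : Prop :=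
  ∀ z : List A, InfFactor z w →
    ∀ r : ℚ, 1 < r → r ≤ 2 → α ≤ (r : ℝ) → ¬ IsUndirectedPow r z

/-- The infinite word `w` is undirected `α⁺`-free: no factor of `w` is an undirected
`r`-power with rational `r > α` (where `1 < r ≤ 2`). -/
def UndirectedPlusFree {A : Type*} (α : ℝ) (w : ℕ → A) : Prop :=
  ∀ z : List A, InfFactor z w →
    ∀ r : ℚ, 1 < r → r ≤ 2 → α < (r : ℝ) → ¬ IsUndirectedPow r z

/-- The infinite word `w` is (ordinary) `α`-free. -/
def OrdinaryFree {A : Type*} (α : ℝ) (w : ℕ → A) : Prop :=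
  ∀ z : List A, InfFactor z w →
    ∀ r : ℚ, 1 < r → r ≤ 2 → α ≤ (r : ℝ) → ¬ IsOrdinaryPow r z

/-- The infinite word `w` is (ordinary) `α⁺`-free. -/
def OrdinaryPlusFree {A : Type*} (α : ℝ) (w : ℕ → A) : Prop :=
  ∀ z : List A, InfFactor z w →
    ∀ r : ℚ, 1 < r → r ≤ 2 → α < (r : ℝ) → ¬ IsOrdinaryPow r z

/-- The undirected repetition threshold for `k` letters: the infimum of the set of
rationals `r ∈ (1, 2]` such that undirected `r`-powers are `k`-avoidable. -/
noncomputable def URT (k : ℕ) : ℝ :=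
  sInf {a : ℝ | ∃ r : ℚ, a = (r : ℝ) ∧ 1 < r ∧ r ≤ 2 ∧
    ∃ w : ℕ → Fin k, UndirectedFree (r : ℝ) w}

/-- The (ordinary) repetition threshold for `k` letters. -/
noncomputable def RT (k : ℕ) : ℝ :=
  sInf {a : ℝ | ∃ r : ℚ, a = (r : ℝ) ∧ 1 < r ∧ r ≤ 2 ∧
    ∃ w : ℕ → Fin k, OrdinaryFree (r : ℝ) w}


def tm : ℕ → Bool
  | 0 => false
  | (n+1) => xor (tm ((n+1)/2)) ((n+1) % 2 == 1)
decreasing_by exact Nat.div_lt_self (Nat.succ_pos n) one_lt_two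

lemma tm_double (n : ℕ) : tm (2*n) = tm n := by
  cases n with
  | zero => rfl
  | succ m =>
    rw [show 2*(m+1) = (2*m+1)+1 by ring, tm]
    have h1 : (2*m+1+1)/2 = m+1 := by omega
    have h2 : (2*m+1+1) % 2 = 0 := by omega
    simp [h1, h2]

lemma tm_odd (n : ℕ) : tm (2*n+1) = !tm n := by
  rw [show 2*n+1 = (2*n)+1 by ring, tm]
  have h1 : (2*n+1)/2 = n := by omega
  have h2 : (2*n+1) % 2 = 1 := by omega
  simp [h1, h2, Bool.xor_true]

lemma tm_pair_odd {n : ℕ} (h : tm n = tm (n+1)) : n % 2 = 1 := by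
  by_contra hne
  obtain ⟨m, rfl⟩ : ∃ m, n = 2*m := ⟨n/2, by omega⟩
  rw [tm_double, tm_odd] at h
  simp at h

lemma tm_no_triple {n : ℕ} (h1 : tm n = tm (n+1)) (h2 : tm (n+1) = tm (n+2)) : False := by
  have := tm_pair_odd h1
  have := tm_pair_odd h2
  omega

/-- Thue–Morse is overlap-free. -/
lemma tm_no_overlap (p : ℕ) (hp : 1 ≤ p) (i : ℕ)
    (H : ∀ j ≤ p, tm (i+j+p) = tm (i+j)) : False := by
  induction p using Nat.strong_induction_on generalizing i with
  | _ p ih =>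
  rcases (by omega : p = 1 ∨ (p % 2 = 0 ∧ 2 ≤ p) ∨ (p % 2 = 1 ∧ 3 ≤ p)) with h | h | h
  · subst h
    have h1 := H 0 (by omega)
    have h2 := H 1 (by omega)
    rw [show i+0+1 = i+1 by ring, show i+0 = i by ring] at h1
    rw [show i+1+1 = i+2 by ring] at h2
    exact tm_no_triple h1.symm h2.symm
  · -- p even
    obtain ⟨q, rfl⟩ : ∃ q, p = 2*q := ⟨p/2, by omega⟩
    apply ih q (by omega) (by omega) (i/2)
    intro j hj
    have key := H (2*j) (by omega)
    rcases (by omega : i % 2 = 0 ∨ i % 2 = 1) with h2 | h2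
    · rw [show i + 2*j + 2*q = 2*(i/2 + j + q) by omega,
        show i + 2*j = 2*(i/2+j) by omega, tm_double, tm_double] at key
      exact key
    · rw [show i + 2*j + 2*q = 2*(i/2 + j + q) + 1 by omega,
        show i + 2*j = 2*(i/2+j) + 1 by omega, tm_odd, tm_odd] at key
      simpa using key
  · -- p odd, p ≥ 3
    obtain ⟨s, rfl⟩ : ∃ s, p = 2*s+1 := ⟨p/2, by omega⟩
    have hs : 1 ≤ s := by omega
    have HA : ∀ m, i ≤ 2*m → 2*m ≤ i + (2*s+1) → tm (m+s) = !tm m := by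
      intro m h1 h2
      have key := H (2*m - i) (by omega)
      rw [show i + (2*m - i) + (2*s+1) = 2*(m+s)+1 by omega,
        show i + (2*m - i) = 2*m by omega, tm_odd, tm_double] at key
      rw [← key, Bool.not_not]
    have HB : ∀ m, i ≤ 2*m+1 → 2*m+1 ≤ i + (2*s+1) → tm (m+s+1) = !tm m := by
      intro m h1 h2
      have key := H (2*m+1 - i) (by omega)
      rw [show i + (2*m+1 - i) + (2*s+1) = 2*(m+s+1) by omega,
        show i + (2*m+1 - i) = 2*m+1 by omega, tm_odd, tm_double] at key
      exact key
    rcases (by omega : i % 2 = 0 ∨ i % 2 = 1) with h2 | h2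
    · obtain ⟨a, rfl⟩ : ∃ a, i = 2*a := ⟨i/2, by omega⟩
      have t1 := HA a (by omega) (by omega)
      have t2 := HB a (by omega) (by omega)
      have t3 := HA (a+1) (by omega) (by omega)
      have t4 := HB (a+1) (by omega) (by omega)
      rw [show a+1+s = a+s+1 by ring] at t3
      rw [show a+1+s+1 = (a+s)+2 by ring] at t4
      exact tm_no_triple (n := a+s) (t1.trans t2.symm) (t3.trans t4.symm)
    · obtain ⟨a, rfl⟩ : ∃ a, i = 2*a+1 := ⟨i/2, by omega⟩
      have t1 := HB a (by omega) (by omega)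
      have t2 := HA (a+1) (by omega) (by omega)
      have t3 := HB (a+1) (by omega) (by omega)
      have t4 := HA (a+2) (by omega) (by omega)
      rw [show a+1+s = a+s+1 by ring] at t2
      rw [show a+1+s+1 = a+s+2 by ring] at t3
      rw [show a+2+s = a+s+2 by ring] at t4
      have e1 : tm a = tm (a+1) := by
        have := t1.symm.trans t2
        simpa using this
      have e2 : tm (a+1) = tm (a+2) := by
        have := t3.symm.trans t4
        simpa using this
      exact tm_no_triple e1 e2

/-- Encoding of a pair of Thue–Morse letters as a ternary letter. -/
def twEncode (a b : Bool) : Fin 3 := if a = b then 0 else if a then 2 else 1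

/-- The ternary squarefree (Thue) word. -/
def tw (n : ℕ) : Fin 3 := twEncode (tm n) (tm (n+1))

lemma twEncode_prop : ∀ a b a' b' : Bool, twEncode a b = twEncode a' b' →
    ((a == a') = (b == b') ∧ (a ≠ a' → a = b)) := by decide

/-- The Thue word is squarefree. -/
theorem tw_nosq (i p : ℕ) (hp : 1 ≤ p) (h : ∀ j < p, tw (i+j) = tw (i+p+j)) : False := by
  have e : ∀ j ≤ p, (tm (i+j) == tm (i+p+j)) = (tm i == tm (i+p)) := by
    intro j hj
    induction j with
    | zero => simp
    | succ n ihn =>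
      have hn := ihn (by omega)
      have hstep := (twEncode_prop _ _ _ _ (h n (by omega))).1
      rw [show i+(n+1) = i+n+1 by ring, show i+p+(n+1) = i+p+n+1 by ring]
      rw [← hstep]
      exact hn
  cases hc : (tm i == tm (i+p)) with
  | true =>
    apply tm_no_overlap p hp i
    intro j hj
    have hj2 := e j hj
    rw [hc] at hj2
    have : tm (i+j) = tm (i+p+j) := by simpa using hj2
    rw [show i+j+p = i+p+j by ring]
    exact this.symm
  | false =>
    have hne : ∀ j ≤ p, tm (i+j) ≠ tm (i+p+j) := by
      intro j hj
      have hj2 := e j hj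
      rw [hc] at hj2
      simpa using hj2
    have heq : ∀ j < p, tm (i+j) = tm (i+j+1) := by
      intro j hj
      exact (twEncode_prop _ _ _ _ (h j hj)).2 (hne j (by omega))
    rcases (by omega : p = 1 ∨ 2 ≤ p) with hp1 | hp2
    · subst hp1
      have h1 := heq 0 (by omega)
      have h2 := hne 0 (by omega)
      rw [show i+0 = i by ring, show i+0+1 = i+1 by ring] at h1
      rw [show i+0 = i by ring, show i+1+0 = i+1 by ring] at h2
      exact h2 h1
    · have h1 := heq 0 (by omega)
      have h2 := heq 1 (by omega)
      rw [show i+0 = i by ring, show i+0+1 = i+1 by ring] at h1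
      rw [show i+1+1 = i+2 by ring] at h2
      exact tm_no_triple h1 h2

lemma factor_get' {A : Type*} {z : List A} {w : ℕ → A} {i : ℕ}
    (hz : z = (List.range z.length).map fun j => w (i+j)) {j : ℕ} (hj : j < z.length) :
    z[j] = w (i+j) := by
  rw [List.getElem_of_eq hz hj]
  simp

/-- Marking an ordinary `α`-free word over `m` letters with positions mod 3 yields an
undirected `α`-free word over `k ≥ 3m` letters. -/
lemma transfer {m k : ℕ} (hm : 0 < m) (hmk : 3 * m ≤ k) (α : ℝ) (w : ℕ → Fin m)
    (hw : OrdinaryFree α w) :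
    ∃ w' : ℕ → Fin k, UndirectedFree α w' := by
  refine ⟨fun n => ⟨3 * (w n).val + n % 3, by have := (w n).isLt; omega⟩, ?_⟩
  set w' : ℕ → Fin k := fun n => ⟨3 * (w n).val + n % 3, by have := (w n).isLt; omega⟩
    with hw'
  have hmod : ∀ a b : ℕ, w' a = w' b → a % 3 = b % 3 := by
    intro a b hab
    have h := congrArg Fin.val hab
    simp only [hw'] at h
    omega
  set proj : Fin k → Fin m := fun c => ⟨c.val / 3 % m, Nat.mod_lt _ hm⟩ with hprojdef
  have hproj : ∀ n, proj (w' n) = w n := by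
    intro n
    apply Fin.ext
    simp only [hprojdef, hw']
    have h3 : (3 * (w n).val + n % 3) / 3 = (w n).val := by omega
    rw [h3, Nat.mod_eq_of_lt (w n).isLt]
  rintro z ⟨i, hz⟩ r' h1 h2 hrr' ⟨x, y, x', hsplit, hx, hxx', hlen⟩
  have hxl : 1 ≤ x.length := List.length_pos_iff.mpr hx
  have hx'len : x'.length = x.length := by rcases hxx' with h | h <;> simp [h]
  have hcase : x' = x ∨ (x' = x.reverse ∧ 2 ≤ x.length) := by
    rcases hxx' with h | h
    · exact Or.inl h
    · rcases (by omega : x.length = 1 ∨ 2 ≤ x.length) with h1' | h2'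
      · left
        obtain ⟨a, rfl⟩ := List.length_eq_one_iff.mp h1'
        simpa using h
      · exact Or.inr ⟨h, h2'⟩
  rcases hcase with hord | ⟨hrev, h2x⟩
  · -- ordinary power: project to `w`
    subst hord
    have hmapfac : z.map proj = (List.range z.length).map fun j => w (i+j) := by
      conv_lhs => rw [hz]
      rw [List.map_map]
      have hfun : proj ∘ (fun j => w' (i+j)) = fun j => w (i+j) :=
        funext fun j => hproj (i+j)
      rw [hfun]
    apply hw (z.map proj) ⟨i, by rw [List.length_map]; exact hmapfac⟩ r' h1 h2 hrr'
    refine ⟨x'.map proj, y.map proj, ?_, ?_, ?_⟩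
    · rw [hsplit]; simp
    · simpa using hx
    · simpa using hlen
  · -- reversed copy of length ≥ 2: impossible because of the position markers
    set p := x.length with hp
    set q := y.length with hq
    have hzlen : z.length = p + (q + p) := by
      rw [hsplit]; simp only [List.length_append]; omega
    have hb1 : p + q < z.length := by omega
    have hb2 : p + q + 1 < z.length := by omega
    have hc1 : p - 1 < z.length := by omega
    have hc2 : p - 2 < z.length := by omega
    have hzget : ∀ j (hj : j < x'.length) (hb : p + q + j < z.length),
        z[p+q+j]'hb = x'[j]'hj := by
      intro j hj hb
      rw [List.getElem_of_eq hsplit hb]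
      rw [List.getElem_append_right (by simp only [List.length_append]; omega)]
      congr 1
      simp only [List.length_append]
      omega
    have hzgetl : ∀ j (hj : j < x.length) (hb : j < z.length), z[j]'hb = x[j]'hj := by
      intro j hj hb
      rw [List.getElem_of_eq hsplit hb]
      rw [List.getElem_append_left (by simp only [List.length_append]; omega),
        List.getElem_append_left hj]
    have hrevget : ∀ j (hj : j < x'.length), x'[j]'hj = x[p-1-j]'(by omega) := by
      intro j hj
      rw [List.getElem_of_eq hrev hj, List.getElem_reverse]
    have e1 : w' (i + (p+q)) = w' (i + (p-1)) := by
      have a1 := factor_get' hz hb1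
      have a2 := factor_get' hz hc1
      have a3 := hzget 0 (by omega) (by omega)
      have a4 := hrevget 0 (by omega)
      have a5 := hzgetl (p-1) (by omega) hc1
      simp only [Nat.add_zero] at a3
      simp only [Nat.sub_zero] at a4
      exact a1.symm.trans (a3.trans (a4.trans (a5.symm.trans a2)))
    have e2 : w' (i + (p+q+1)) = w' (i + (p-2)) := by
      have a1 := factor_get' hz hb2
      have a2 := factor_get' hz hc2
      have a3 := hzget 1 (by omega) (by omega)
      have a4 := hrevget 1 (by omega)
      have a5 := hzgetl (p-2) (by omega) hc2
      simp only [show p-1-1 = p-2 from by omega] at a4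
      exact a1.symm.trans (a3.trans (a4.trans (a5.symm.trans a2)))
    have m1 := hmod _ _ e1
    have m2 := hmod _ _ e2
    omega

/-- A squarefree word is ordinary 2-free. -/
lemma noSq_ordinaryFree {A : Type*} {w : ℕ → A}
    (hw : ∀ i p, 1 ≤ p → ¬ ∀ j < p, w (i+j) = w (i+p+j)) :
    OrdinaryFree 2 w := by
  rintro z ⟨i, hz⟩ r h1 h2 h3 ⟨x, y, hsplit, hx, hlen⟩
  have hr : r = 2 := le_antisymm h2 (by exact_mod_cast h3)
  subst hr
  have hzl : z.length = x.length + (y.length + x.length) := by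
    rw [hsplit]; simp
  have hy : y.length = 0 := by
    rw [hzl] at hlen
    push_cast at hlen
    have : (y.length : ℚ) = 0 := by linarith
    exact_mod_cast this
  obtain rfl : y = [] := List.length_eq_zero_iff.mp hy
  have hxx : z = x ++ x := by simpa using hsplit
  have hxl : 1 ≤ x.length := List.length_pos_iff.mpr hx
  apply hw i x.length hxl
  intro j hj
  have hjz : j < z.length := by omega
  have hpj : x.length + j < z.length := by omega
  have g1 : z[j]'hjz = x[j]'hj := by
    rw [List.getElem_of_eq hxx hjz]
    rw [List.getElem_append_left hj]
  have g2 : z[x.length + j]'hpj = x[j]'hj := by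
    rw [List.getElem_of_eq hxx hpj]
    rw [List.getElem_append_right (by omega)]
    congr 1
    omega
  have e1 := factor_get' hz hjz
  have e2 := factor_get' hz hpj
  rw [g1] at e1
  rw [g2] at e2
  rw [show i + x.length + j = i + (x.length + j) from by ring]
  exact e1.symm.trans e2


/-- For every integer `k ≥ 9`, `URT(k) ≤ RT(⌊k/3⌋)`. -/
theorem URT_le_RT_floor_third (k : ℕ) (hk : 9 ≤ k) : URT k ≤ RT (k / 3) := by
  set m := k / 3 with hm
  have hm3 : 3 ≤ m := by omega
  have h3m : 3 * m ≤ k := by omega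
  have hword : ∃ w : ℕ → Fin m, OrdinaryFree ((2:ℚ):ℝ) w := by
    refine ⟨fun n => Fin.castLE hm3 (tw n), ?_⟩
    have h2 : ((2:ℚ):ℝ) = (2:ℝ) := by norm_num
    rw [h2]
    apply noSq_ordinaryFree
    intro i p hp hcontra
    apply tw_nosq i p hp
    intro j hj
    exact Fin.castLE_injective _ (hcontra j hj)
  obtain ⟨w0, hw0⟩ := hword
  rw [URT, RT]
  apply csInf_le_csInf
  · refine ⟨1, ?_⟩
    rintro a ⟨r, rfl, h1, h2, w, hw⟩
    exact_mod_cast h1.le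
  · exact ⟨((2:ℚ):ℝ), 2, rfl, by norm_num, le_refl 2, w0, hw0⟩
  · rintro a ⟨r, rfl, h1, h2, w, hw⟩
    obtain ⟨w', hw'⟩ := transfer (by omega : 0 < m) h3m ((r:ℝ)) w hw
    exact ⟨r, rfl, h1, h2, w', hw'⟩
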